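/- (Alternating even/odd-indexed sums of Horadam numbers) For every even natural number n: Σ_{k=0}^{n/2} (−1)^k·H(2k) = (1/(a² + (b+1)²))·( (−1)^(n/2)·(H(n+2) + b²·H n) + H 0 + b²·H₋₂ ), and for every odd natural number n: Σ_{k=0}^{(n−1)/2} (−1)^k·H(2k+1) = (1/(a² + (b+1)²))·( (−1)^((n−1)/2)·(H(n+2) + b²·H n) + H 1 + b²·H₋₁ ). -/

import Mathlib

theorem stmt_8 (a b : ℝ) (ha : 0 < a) (hb : 0 < b)
    (H : ℕ → ℝ)
    (hH : ∀ n : ℕ, 2 ≤ n → H n = a * H (n-1) + b * H (n-2))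
    (Hm1 Hm2 : ℝ)
    (hHm1 : Hm1 = (H 1 - a * H 0) / b)
    (hHm2 : Hm2 = ((a^2 + b) * H 0 - a * H 1) / b^2) :
    (∀ n : ℕ, Even n →
      ∑ k ∈ Finset.range (n/2 + 1), (-1:ℝ)^k * H (2*k)
        = (1 / (a^2 + (b+1)^2)) *
          ((-1:ℝ)^(n/2) * (H (n+2) + b^2 * H n) + H 0 + b^2 * Hm2))
    ∧ (∀ n : ℕ, Odd n →
      ∑ k ∈ Finset.range ((n-1)/2 + 1), (-1:ℝ)^k * H (2*k+1)
        = (1 / (a^2 + (b+1)^2)) *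
          ((-1:ℝ)^((n-1)/2) * (H (n+2) + b^2 * H n) + H 1 + b^2 * Hm1)) := by
  have hb' : b ≠ 0 := ne_of_gt hb
  have hD : a^2 + (b+1)^2 ≠ 0 := by positivity
  have key : ∀ n : ℕ, H (n+4) + b^2 * H (n+2) + (H (n+2) + b^2 * H n)
      = (a^2 + (b+1)^2) * H (n+2) := by
    intro n
    have h2 := hH (n+2) (by omega)
    have h3 := hH (n+3) (by omega)
    have h4 := hH (n+4) (by omega)
    simp only [Nat.add_sub_cancel, show n+2-1 = n+1 from rfl, show n+3-1 = n+2 from rfl,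
      show n+4-1 = n+3 from rfl, show n+2-2 = n from rfl, show n+3-2 = n+1 from rfl,
      show n+4-2 = n+2 from rfl] at h2 h3 h4
    linear_combination h4 + a * h3 - b * h2
  have Heven : ∀ m : ℕ, ∑ k ∈ Finset.range (m + 1), (-1:ℝ)^k * H (2*k)
      = (1 / (a^2 + (b+1)^2)) *
          ((-1:ℝ)^m * (H (2*m+2) + b^2 * H (2*m)) + H 0 + b^2 * Hm2) := by
    intro m
    induction m with
    | zero =>
      have h2 := hH 2 (by omega)
      norm_num at h2 ⊢
      rw [hHm2]
      field_simp
      linear_combination -h2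
    | succ m ih =>
      rw [Finset.sum_range_succ, ih]
      have e1 : 2*(m+1) = 2*m+2 := by ring
      rw [e1]
      have k := key (2*m)
      have e2 : 2*m+2+2 = 2*m+4 := by omega
      rw [e2]
      field_simp
      linear_combination ((-1:ℝ)^m) * k
  have Hodd : ∀ m : ℕ, ∑ k ∈ Finset.range (m + 1), (-1:ℝ)^k * H (2*k+1)
      = (1 / (a^2 + (b+1)^2)) *
          ((-1:ℝ)^m * (H (2*m+3) + b^2 * H (2*m+1)) + H 1 + b^2 * Hm1) := by
    intro m
    induction m with
    | zero =>
      have h2 := hH 2 (by omega)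
      have h3 := hH 3 (by omega)
      norm_num at h2 h3 ⊢
      rw [hHm1]
      field_simp
      linear_combination (-1:ℝ)*h3 + (-a)*h2
    | succ m ih =>
      rw [Finset.sum_range_succ, ih]
      have e1 : 2*(m+1)+1 = 2*m+3 := by ring
      have e2 : 2*(m+1)+3 = 2*m+5 := by ring
      rw [e1, e2]
      have k := key (2*m+1)
      have e3 : 2*m+1+4 = 2*m+5 := by ring
      have e4 : 2*m+1+2 = 2*m+3 := by ring
      rw [e3, e4] at k
      field_simp
      linear_combination ((-1:ℝ)^m) * k
  constructor
  · intro n hn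
    obtain ⟨m, rfl⟩ := hn
    have h1 : (m + m)/2 = m := by omega
    have h2 : m + m = 2*m := by ring
    rw [h1, h2]
    have h3 : 2*m+2 = 2*m+2 := rfl
    exact Heven m
  · intro n hn
    obtain ⟨m, rfl⟩ := hn
    have h1 : (2*m+1-1)/2 = m := by omega
    rw [h1]
    have h2 : 2*m+1+2 = 2*m+3 := by ring
    rw [h2]
    exact Hodd m
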